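/- Let D ⊆ ℝ^d be convex. Suppose X, X' : [0,T] → D satisfy X(t) - X'(t) = ∫_0^t h(s) ds + ∫_0^t n(s) dℓ(s) - ∫_0^t n'(s) dℓ'(s), where h is integrable, ℓ, ℓ' are continuous nondecreasing with ℓ(0) = ℓ'(0) = 0, ℓ increases only at times t with X(t) ∈ ∂D and then n(t) is an inward unit normal to D at X(t), and symmetrically for ℓ', n', X'. Then for all 0 ≤ s ≤ t ≤ T: ‖X(t)-X'(t)‖² - ‖X(s)-X'(s)‖² ≤ ∫_s^t 2 (X(u)-X'(u))·h(u) du. -/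

import Mathlib

open MeasureTheory Set intervalIntegral
open scoped RealInnerProductSpace

set_option maxHeartbeats 2000000 in
/-- Key observation for reflected paths in a convex domain: the normal reflection
terms can only decrease the squared distance between two paths, so
`‖X t - X' t‖² - ‖X s - X' s‖² ≤ ∫_s^t 2 ⟪X - X', h⟫`. -/
theorem reflection_decreases_distance (d : ℕ) (T : ℝ) (hT : 0 < T)
    (D : Set (EuclideanSpace ℝ (Fin d))) (hD : Convex ℝ D)
    (X X' : ℝ → EuclideanSpace ℝ (Fin d))
    (hX : ∀ t ∈ Icc (0:ℝ) T, X t ∈ D) (hX' : ∀ t ∈ Icc (0:ℝ) T, X' t ∈ D)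
    (hXc : ContinuousOn X (Icc 0 T)) (hX'c : ContinuousOn X' (Icc 0 T))
    (h : ℝ → EuclideanSpace ℝ (Fin d)) (hh : IntegrableOn h (Icc 0 T))
    (n n' : ℝ → EuclideanSpace ℝ (Fin d))
    (ℓStj ℓ'Stj : StieltjesFunction ℝ)
    (hℓc : Continuous ℓStj) (hℓ'c : Continuous ℓ'Stj)
    (hℓ0 : ℓStj 0 = 0) (hℓ'0 : ℓ'Stj 0 = 0)
    (hnInt : IntegrableOn n (Icc 0 T) ℓStj.measure)
    (hn'Int : IntegrableOn n' (Icc 0 T) ℓ'Stj.measure)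
    (hn : ∀ᵐ t ∂(ℓStj.measure.restrict (Icc 0 T)),
      X t ∈ frontier D ∧ ‖n t‖ = 1 ∧ ∀ z ∈ D, 0 ≤ ⟪z - X t, n t⟫)
    (hn' : ∀ᵐ t ∂(ℓ'Stj.measure.restrict (Icc 0 T)),
      X' t ∈ frontier D ∧ ‖n' t‖ = 1 ∧ ∀ z ∈ D, 0 ≤ ⟪z - X' t, n' t⟫)
    (heq : ∀ t ∈ Icc (0:ℝ) T,
      X t - X' t = (∫ s in (0:ℝ)..t, h s)
        + (∫ s in Ioc (0:ℝ) t, n s ∂ℓStj.measure)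
        - ∫ s in Ioc (0:ℝ) t, n' s ∂ℓ'Stj.measure) :
    ∀ s ∈ Icc (0:ℝ) T, ∀ t ∈ Icc (0:ℝ) T, s ≤ t →
      ‖X t - X' t‖ ^ 2 - ‖X s - X' s‖ ^ 2 ≤
        ∫ u in s..t, 2 * ⟪X u - X' u, h u⟫ := by
  classical
  set μ := ℓStj.measure with hμdef
  set ν := ℓ'Stj.measure with hνdef
  set Y : ℝ → EuclideanSpace ℝ (Fin d) := fun u => X u - X' u with hYdef
  have hYeq : ∀ u, Y u = X u - X' u := fun u => rfl
  have hYc : ContinuousOn Y (Icc 0 T) := hXc.sub hX'c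
  have hIccMeas : MeasurableSet (Icc (0:ℝ) T) := measurableSet_Icc
  obtain ⟨M, hM⟩ := isCompact_Icc.exists_bound_of_continuousOn hYc
  have hYm : AEStronglyMeasurable Y (volume.restrict (Icc 0 T)) :=
    hYc.aestronglyMeasurable hIccMeas
  -- integrability of ⟪Y u, h u⟫
  have hgInt : IntegrableOn (fun u => ⟪Y u, h u⟫) (Icc 0 T) := by
    refine (hh.norm.const_mul M).mono' (hYm.inner hh.aestronglyMeasurable) ?_
    filter_upwards [ae_restrict_mem hIccMeas] with u hu
    calc ‖⟪Y u, h u⟫‖ ≤ ‖Y u‖ * ‖h u‖ := norm_inner_le_norm _ _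
      _ ≤ M * ‖h u‖ := mul_le_mul_of_nonneg_right (hM u hu) (norm_nonneg _)
  -- interval integrability helpers
  have hsubIcc : ∀ ⦃a b : ℝ⦄, a ∈ Icc (0:ℝ) T → b ∈ Icc (0:ℝ) T → a ≤ b →
      uIcc a b ⊆ Icc 0 T := by
    intro a b ha hb hab
    rw [uIcc_of_le hab]; exact Icc_subset_Icc ha.1 hb.2
  have hIocsub : ∀ ⦃a b : ℝ⦄, a ∈ Icc (0:ℝ) T → b ∈ Icc (0:ℝ) T →
      Ioc a b ⊆ Icc 0 T := by
    intro a b ha hb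
    exact fun x hx => ⟨ha.1.trans hx.1.le, hx.2.trans hb.2⟩
  have hIntIh : ∀ ⦃a b : ℝ⦄, a ∈ Icc (0:ℝ) T → b ∈ Icc (0:ℝ) T → a ≤ b →
      IntervalIntegrable h volume a b := fun a b ha hb hab =>
    (hh.mono_set (hsubIcc ha hb hab)).intervalIntegrable
  have hIntIg : ∀ ⦃a b : ℝ⦄, a ∈ Icc (0:ℝ) T → b ∈ Icc (0:ℝ) T → a ≤ b →
      IntervalIntegrable (fun u => ⟪Y u, h u⟫) volume a b := fun a b ha hb hab =>
    (hgInt.mono_set (hsubIcc ha hb hab)).intervalIntegrable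
  have hIntInorm : ∀ ⦃a b : ℝ⦄, a ∈ Icc (0:ℝ) T → b ∈ Icc (0:ℝ) T → a ≤ b →
      IntervalIntegrable (fun u => ‖h u‖) volume a b := fun a b ha hb hab =>
    IntegrableOn.intervalIntegrable (Integrable.norm (hh.mono_set (hsubIcc ha hb hab)))
  -- increment identity
  have hYdiff : ∀ a ∈ Icc (0:ℝ) T, ∀ b ∈ Icc (0:ℝ) T, a ≤ b →
      Y b - Y a = (∫ u in a..b, h u) + (∫ u in Ioc a b, n u ∂μ)
        - ∫ u in Ioc a b, n' u ∂ν := by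
    intro a ha b hb hab
    have h0T : (0:ℝ) ∈ Icc (0:ℝ) T := ⟨le_refl 0, hT.le⟩
    have h1 : (∫ u in (0:ℝ)..a, h u) + ∫ u in a..b, h u = ∫ u in (0:ℝ)..b, h u :=
      intervalIntegral.integral_add_adjacent_intervals
        (hIntIh h0T ha ha.1) (hIntIh ha hb hab)
    have h2 : (∫ u in Ioc (0:ℝ) a, n u ∂μ) + ∫ u in Ioc a b, n u ∂μ
        = ∫ u in Ioc (0:ℝ) b, n u ∂μ := by
      rw [← setIntegral_union (Set.Ioc_disjoint_Ioc_of_le le_rfl) measurableSet_Ioc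
        (hnInt.mono_set (hIocsub h0T ha)) (hnInt.mono_set (hIocsub ha hb)),
        Ioc_union_Ioc_eq_Ioc ha.1 hab]
    have h3 : (∫ u in Ioc (0:ℝ) a, n' u ∂ν) + ∫ u in Ioc a b, n' u ∂ν
        = ∫ u in Ioc (0:ℝ) b, n' u ∂ν := by
      rw [← setIntegral_union (Set.Ioc_disjoint_Ioc_of_le le_rfl) measurableSet_Ioc
        (hn'Int.mono_set (hIocsub h0T ha)) (hn'Int.mono_set (hIocsub ha hb)),
        Ioc_union_Ioc_eq_Ioc ha.1 hab]
    rw [hYeq, hYeq, heq b hb, heq a ha, ← h1, ← h2, ← h3]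
    abel
  -- key per-interval estimate
  have key : ∀ ε : ℝ, 0 ≤ ε → ∀ a ∈ Icc (0:ℝ) T, ∀ b ∈ Icc (0:ℝ) T, a ≤ b →
      (∀ u ∈ Ioc a b, ‖Y b - Y u‖ ≤ ε) →
      ‖Y b‖ ^ 2 - ‖Y a‖ ^ 2 ≤ (∫ u in a..b, 2 * ⟪Y u, h u⟫)
        + 2 * ε * ((∫ u in a..b, ‖h u‖) + (ℓStj b - ℓStj a) + (ℓ'Stj b - ℓ'Stj a)) := by
    intro ε hε a ha b hb hab hosc
    have hIoc : Ioc a b ⊆ Icc (0:ℝ) T := hIocsub ha hb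
    have hid : ‖Y b‖ ^ 2 - ‖Y a‖ ^ 2 ≤ 2 * ⟪Y b, Y b - Y a⟫ := by
      have h1 : ‖Y b - (Y b - Y a)‖ ^ 2
          = ‖Y b‖ ^ 2 - 2 * ⟪Y b, Y b - Y a⟫ + ‖Y b - Y a‖ ^ 2 :=
        norm_sub_sq_real _ _
      have h2 : Y b - (Y b - Y a) = Y a := by abel
      rw [h2] at h1
      nlinarith [sq_nonneg ‖Y b - Y a‖]
    -- expand the inner product
    have hexp : ⟪Y b, Y b - Y a⟫ = (∫ u in Ioc a b, ⟪Y b, h u⟫)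
        + (∫ u in Ioc a b, ⟪Y b, n u⟫ ∂μ) - ∫ u in Ioc a b, ⟪Y b, n' u⟫ ∂ν := by
      rw [hYdiff a ha b hb hab, inner_sub_right, inner_add_right,
        intervalIntegral.integral_of_le hab,
        integral_inner (hh.mono_set hIoc) (Y b),
        integral_inner (hnInt.mono_set hIoc) (Y b),
        integral_inner (hn'Int.mono_set hIoc) (Y b)]
    -- finiteness of the Stieltjes measures on Ioc a b
    have hμfin : μ (Ioc a b) ≠ ⊤ := by
      rw [hμdef, ℓStj.measure_Ioc]; exact ENNReal.ofReal_ne_top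
    have hνfin : ν (Ioc a b) ≠ ⊤ := by
      rw [hνdef, ℓ'Stj.measure_Ioc]; exact ENNReal.ofReal_ne_top
    -- bound the n-term
    have hbn : (∫ u in Ioc a b, ⟪Y b, n u⟫ ∂μ) ≤ ε * (ℓStj b - ℓStj a) := by
      have hint1 : Integrable (fun u => ⟪Y b, n u⟫) (μ.restrict (Ioc a b)) :=
        Integrable.const_inner (Y b) (hnInt.mono_set hIoc)
      have hae : ∀ᵐ u ∂(μ.restrict (Ioc a b)), ⟪Y b, n u⟫ ≤ ε := by
        filter_upwards [ae_restrict_of_ae_restrict_of_subset hIoc hn,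
          ae_restrict_mem measurableSet_Ioc] with u hu humem
        have hYun : ⟪Y u, n u⟫ ≤ 0 := by
          have h1 : 0 ≤ ⟪X' u - X u, n u⟫ := hu.2.2 (X' u) (hX' u (hIoc humem))
          have h2 : X' u - X u = -(Y u) := by rw [hYeq]; abel
          rw [h2, inner_neg_left] at h1; linarith
        have h3 : ⟪Y b - Y u, n u⟫ ≤ ε := by
          calc ⟪Y b - Y u, n u⟫ ≤ ‖Y b - Y u‖ * ‖n u‖ := real_inner_le_norm _ _
            _ = ‖Y b - Y u‖ := by rw [hu.2.1, mul_one]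
            _ ≤ ε := hosc u humem
        have h4 : ⟪Y b, n u⟫ = ⟪Y b - Y u, n u⟫ + ⟪Y u, n u⟫ := by
          rw [← inner_add_left]; congr 1; abel
        linarith
      calc (∫ u in Ioc a b, ⟪Y b, n u⟫ ∂μ) ≤ ∫ _ in Ioc a b, ε ∂μ :=
            integral_mono_ae hint1 (integrableOn_const hμfin) hae
        _ = (μ (Ioc a b)).toReal • ε := setIntegral_const ε
        _ = ε * (ℓStj b - ℓStj a) := by
            rw [hμdef, ℓStj.measure_Ioc,
              ENNReal.toReal_ofReal (sub_nonneg.2 (ℓStj.mono hab))]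
            rw [smul_eq_mul]; ring
    -- bound the n'-term
    have hbn' : -(∫ u in Ioc a b, ⟪Y b, n' u⟫ ∂ν) ≤ ε * (ℓ'Stj b - ℓ'Stj a) := by
      have hint1 : Integrable (fun u => ⟪Y b, n' u⟫) (ν.restrict (Ioc a b)) :=
        Integrable.const_inner (Y b) (hn'Int.mono_set hIoc)
      have hae : ∀ᵐ u ∂(ν.restrict (Ioc a b)), -ε ≤ ⟪Y b, n' u⟫ := by
        filter_upwards [ae_restrict_of_ae_restrict_of_subset hIoc hn',
          ae_restrict_mem measurableSet_Ioc] with u hu humem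
        have hYun : 0 ≤ ⟪Y u, n' u⟫ := by
          have h1 : 0 ≤ ⟪X u - X' u, n' u⟫ := hu.2.2 (X u) (hX u (hIoc humem))
          rwa [← hYeq] at h1
        have h3 : ⟪Y u - Y b, n' u⟫ ≤ ε := by
          calc ⟪Y u - Y b, n' u⟫ ≤ ‖Y u - Y b‖ * ‖n' u‖ := real_inner_le_norm _ _
            _ = ‖Y b - Y u‖ := by rw [hu.2.1, mul_one, norm_sub_rev]
            _ ≤ ε := hosc u humem
        have h4 : ⟪Y b, n' u⟫ = ⟪Y u, n' u⟫ - ⟪Y u - Y b, n' u⟫ := by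
          rw [← inner_sub_left]; congr 1; abel
        linarith
      have : -ε * (ℓ'Stj b - ℓ'Stj a) ≤ ∫ u in Ioc a b, ⟪Y b, n' u⟫ ∂ν := by
        calc -ε * (ℓ'Stj b - ℓ'Stj a) = (ν (Ioc a b)).toReal • (-ε) := by
              rw [hνdef, ℓ'Stj.measure_Ioc,
                ENNReal.toReal_ofReal (sub_nonneg.2 (ℓ'Stj.mono hab))]
              rw [smul_eq_mul]; ring
          _ = ∫ _ in Ioc a b, (-ε) ∂ν := (setIntegral_const (-ε)).symm
          _ ≤ ∫ u in Ioc a b, ⟪Y b, n' u⟫ ∂ν :=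
              integral_mono_ae (integrableOn_const hνfin) hint1 hae
      linarith
    -- bound the h-term
    have hbh : (∫ u in Ioc a b, ⟪Y b, h u⟫)
        ≤ (∫ u in a..b, ⟪Y u, h u⟫) + ε * ∫ u in a..b, ‖h u‖ := by
      have hint1 : Integrable (fun u => ⟪Y b, h u⟫) (volume.restrict (Ioc a b)) :=
        Integrable.const_inner (Y b) (hh.mono_set hIoc)
      have hint2 : Integrable (fun u => ⟪Y u, h u⟫ + ε * ‖h u‖)
          (volume.restrict (Ioc a b)) :=
        (hgInt.mono_set hIoc).add (((hh.mono_set hIoc).norm.const_mul ε))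
      have hae : ∀ᵐ u ∂(volume.restrict (Ioc a b)),
          ⟪Y b, h u⟫ ≤ ⟪Y u, h u⟫ + ε * ‖h u‖ := by
        filter_upwards [ae_restrict_mem measurableSet_Ioc] with u humem
        have h3 : ⟪Y b - Y u, h u⟫ ≤ ε * ‖h u‖ := by
          calc ⟪Y b - Y u, h u⟫ ≤ ‖Y b - Y u‖ * ‖h u‖ := real_inner_le_norm _ _
            _ ≤ ε * ‖h u‖ :=
              mul_le_mul_of_nonneg_right (hosc u humem) (norm_nonneg _)
        have h4 : ⟪Y b, h u⟫ = ⟪Y b - Y u, h u⟫ + ⟪Y u, h u⟫ := by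
          rw [← inner_add_left]; congr 1; abel
        linarith
      calc (∫ u in Ioc a b, ⟪Y b, h u⟫)
          ≤ ∫ u in Ioc a b, (⟪Y u, h u⟫ + ε * ‖h u‖) := integral_mono_ae hint1 hint2 hae
        _ = (∫ u in Ioc a b, ⟪Y u, h u⟫) + ∫ u in Ioc a b, ε * ‖h u‖ :=
            integral_add (hgInt.mono_set hIoc) (((hh.mono_set hIoc).norm.const_mul ε))
        _ = (∫ u in a..b, ⟪Y u, h u⟫) + ε * ∫ u in a..b, ‖h u‖ := by
            rw [intervalIntegral.integral_of_le hab, intervalIntegral.integral_of_le hab,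
              MeasureTheory.integral_const_mul]
    have hrw : (∫ u in a..b, 2 * ⟪Y u, h u⟫) = 2 * ∫ u in a..b, ⟪Y u, h u⟫ := by
      rw [intervalIntegral.integral_const_mul]
    rw [hrw]
    have := hexp
    nlinarith [hid, hbn, hbn', hbh]
  -- main argument with partitions
  intro s hs t ht hst
  show ‖Y t‖ ^ 2 - ‖Y s‖ ^ 2 ≤ ∫ u in s..t, 2 * ⟪Y u, h u⟫
  have main : ∀ η : ℝ, 0 < η →
      ‖Y t‖ ^ 2 - ‖Y s‖ ^ 2 ≤ (∫ u in s..t, 2 * ⟪Y u, h u⟫) + η := by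
    intro η hη
    set C : ℝ := (∫ u in s..t, ‖h u‖) + (ℓStj t - ℓStj s) + (ℓ'Stj t - ℓ'Stj s) with hC
    have hC0 : 0 ≤ C := by
      have h1 : 0 ≤ ∫ u in s..t, ‖h u‖ :=
        intervalIntegral.integral_nonneg hst fun u _ => norm_nonneg _
      have h2 := ℓStj.mono hst
      have h3 := ℓ'Stj.mono hst
      rw [hC]; linarith
    set ε : ℝ := η / (2 * (C + 1)) with hεdef
    have hεpos : 0 < ε := div_pos hη (by linarith)
    have hUC := isCompact_Icc.uniformContinuousOn_of_continuous hYc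
    rw [Metric.uniformContinuousOn_iff] at hUC
    obtain ⟨δ, hδpos, hδ⟩ := hUC ε hεpos
    obtain ⟨N, hN⟩ := exists_nat_gt ((t - s) / δ)
    have hts : 0 ≤ t - s := by linarith
    have hNpos : 0 < (N : ℝ) := lt_of_le_of_lt (div_nonneg hts hδpos.le) hN
    have hNne : (N : ℝ) ≠ 0 := hNpos.ne'
    set p : ℕ → ℝ := fun i => s + i * ((t - s) / N) with hp
    have hmesh0 : 0 ≤ (t - s) / N := div_nonneg hts hNpos.le
    have hmeshδ : (t - s) / N < δ := by
      rw [div_lt_iff₀ hNpos]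
      have := (div_lt_iff₀ hδpos).mp hN
      linarith
    have hp0 : p 0 = s := by simp [hp]
    have hpN : p N = t := by
      rw [hp]; field_simp; ring
    have hpmono : ∀ i : ℕ, p i ≤ p (i + 1) := by
      intro i
      rw [hp]
      simp only [Nat.cast_add, Nat.cast_one]
      nlinarith [hmesh0]
    have hpstep : ∀ i : ℕ, p (i + 1) - p i = (t - s) / N := by
      intro i
      rw [hp]
      simp only [Nat.cast_add, Nat.cast_one]
      ring
    have hpmem : ∀ i : ℕ, i ≤ N → p i ∈ Icc (0:ℝ) T := by
      intro i hi
      have h1 : s ≤ p i := by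
        rw [hp]
        nlinarith [mul_nonneg (Nat.cast_nonneg i : (0:ℝ) ≤ i) hmesh0]
      have h2 : p i ≤ t := by
        rw [hp]
        have : (i : ℝ) * ((t - s) / N) ≤ (N : ℝ) * ((t - s) / N) :=
          mul_le_mul_of_nonneg_right (Nat.cast_le.2 hi) hmesh0
        have hNmul : (N : ℝ) * ((t - s) / N) = t - s := by field_simp
        linarith
      exact ⟨hs.1.trans h1, h2.trans ht.2⟩
    -- oscillation bound on each subinterval
    have hosc : ∀ i : ℕ, i < N → ∀ u ∈ Ioc (p i) (p (i + 1)),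
        ‖Y (p (i + 1)) - Y u‖ ≤ ε := by
      intro i hi u hu
      have hpi : p i ∈ Icc (0:ℝ) T := hpmem i hi.le
      have hpi1 : p (i + 1) ∈ Icc (0:ℝ) T := hpmem (i + 1) hi
      have humem : u ∈ Icc (0:ℝ) T :=
        ⟨hpi.1.trans hu.1.le, hu.2.trans hpi1.2⟩
      have hdist : dist (p (i + 1)) u < δ := by
        rw [Real.dist_eq, abs_of_nonneg (by linarith [hu.2] : (0:ℝ) ≤ p (i + 1) - u)]
        have h5 : p (i + 1) - u < (t - s) / N := by
          rw [← hpstep i]; linarith [hu.1]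
        exact h5.trans hmeshδ
      have := hδ (p (i + 1)) hpi1 u humem hdist
      rw [dist_eq_norm] at this
      exact this.le
    -- telescoping
    have htel : ‖Y t‖ ^ 2 - ‖Y s‖ ^ 2
        = ∑ i ∈ Finset.range N, (‖Y (p (i + 1))‖ ^ 2 - ‖Y (p i)‖ ^ 2) := by
      rw [Finset.sum_range_sub fun i => ‖Y (p i)‖ ^ 2, hpN, hp0]
    have hsum : ∑ i ∈ Finset.range N, (‖Y (p (i + 1))‖ ^ 2 - ‖Y (p i)‖ ^ 2)
        ≤ ∑ i ∈ Finset.range N, ((∫ u in p i..p (i + 1), 2 * ⟪Y u, h u⟫)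
          + 2 * ε * ((∫ u in p i..p (i + 1), ‖h u‖)
            + (ℓStj (p (i + 1)) - ℓStj (p i)) + (ℓ'Stj (p (i + 1)) - ℓ'Stj (p i)))) := by
      refine Finset.sum_le_sum fun i hi => ?_
      have hi' := Finset.mem_range.mp hi
      exact key ε hεpos.le (p i) (hpmem i hi'.le) (p (i + 1)) (hpmem (i + 1) hi')
        (hpmono i) (hosc i hi')
    have hsum1 : ∑ i ∈ Finset.range N, (∫ u in p i..p (i + 1), 2 * ⟪Y u, h u⟫)
        = ∫ u in s..t, 2 * ⟪Y u, h u⟫ := by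
      have := intervalIntegral.sum_integral_adjacent_intervals
        (a := p) (n := N) (f := fun u => 2 * ⟪Y u, h u⟫) (μ := volume) ?_
      · rw [this, hp0, hpN]
      · intro k hk
        exact ((hIntIg (hpmem k hk.le) (hpmem (k + 1) hk) (hpmono k)).const_mul 2)
    have hsum2 : ∑ i ∈ Finset.range N, (∫ u in p i..p (i + 1), ‖h u‖)
        = ∫ u in s..t, ‖h u‖ := by
      have := intervalIntegral.sum_integral_adjacent_intervals
        (a := p) (n := N) (f := fun u => ‖h u‖) (μ := volume) ?_
      · rw [this, hp0, hpN]
      · intro k hk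
        exact hIntInorm (hpmem k hk.le) (hpmem (k + 1) hk) (hpmono k)
    have hsum3 : ∑ i ∈ Finset.range N, (ℓStj (p (i + 1)) - ℓStj (p i))
        = ℓStj t - ℓStj s := by
      rw [Finset.sum_range_sub fun i => ℓStj (p i), hpN, hp0]
    have hsum4 : ∑ i ∈ Finset.range N, (ℓ'Stj (p (i + 1)) - ℓ'Stj (p i))
        = ℓ'Stj t - ℓ'Stj s := by
      rw [Finset.sum_range_sub fun i => ℓ'Stj (p i), hpN, hp0]
    have htotal : ‖Y t‖ ^ 2 - ‖Y s‖ ^ 2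
        ≤ (∫ u in s..t, 2 * ⟪Y u, h u⟫) + 2 * ε * C := by
      rw [htel]
      calc ∑ i ∈ Finset.range N, (‖Y (p (i + 1))‖ ^ 2 - ‖Y (p i)‖ ^ 2)
          ≤ _ := hsum
        _ = (∑ i ∈ Finset.range N, ∫ u in p i..p (i + 1), 2 * ⟪Y u, h u⟫)
            + 2 * ε * ((∑ i ∈ Finset.range N, ∫ u in p i..p (i + 1), ‖h u‖)
              + (∑ i ∈ Finset.range N, (ℓStj (p (i + 1)) - ℓStj (p i)))
              + ∑ i ∈ Finset.range N, (ℓ'Stj (p (i + 1)) - ℓ'Stj (p i))) := by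
            rw [Finset.sum_add_distrib, ← Finset.mul_sum, Finset.sum_add_distrib,
              Finset.sum_add_distrib]
        _ = (∫ u in s..t, 2 * ⟪Y u, h u⟫) + 2 * ε * C := by
            rw [hsum1, hsum2, hsum3, hsum4, hC]
    have hfinal : 2 * ε * C ≤ η := by
      have hεeq : 2 * ε * C + 2 * ε = η := by
        rw [hεdef]; field_simp
      linarith [hεpos]
    linarith
  exact le_of_forall_pos_le_add main
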